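/- Let T: 𝒜 → 𝒜 be a linear map which preserves power inner products, and for a measurable set I ⊆ ℝ^d of finite Lebesgue measure let τ(I) := {x ∈ ℝ^d : (Tχ_I)(x) ≠ 0}, where χ_I is the indicator of I. Then there exists a single measurable function α: ℝ^d → ℝ such that for every measurable I ⊆ ℝ^d of finite Lebesgue measure, Tχ_I = e^{iα}·χ_{τ(I)} almost everywhere, and |τ(I)| = |I|. -/

import Mathlib

open MeasureTheory Complex Finset
open scoped Nat ENNReal

noncomputable section

/-- The domain `ℝ^d`. -/
abbrev Dom (d : ℕ) := Fin d → ℝ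

/-- Membership in `𝒜 = L²(ℝ^d) ∩ L^∞(ℝ^d)`. -/
def MemA (d : ℕ) (f : Dom d → ℂ) : Prop :=
  MemLp f 2 (volume : Measure (Dom d)) ∧ MemLp f ⊤ (volume : Measure (Dom d))

/-- `⟨f^k, g^k⟩`, the power inner products. -/
def pip (d : ℕ) (f g : Dom d → ℂ) (k : ℕ) : ℂ :=
  ∫ x : Dom d, (starRingEnd ℂ) (f x) ^ k * g x ^ k

/-- `S_n(f,g)`, the inner product of quadratic `n`-particle vectors. -/
def Sker (c : ℝ) (d : ℕ) (f g : Dom d → ℂ) (n : ℕ) : ℂ :=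
  ∑ p : Nat.Partition n,
    (n ! : ℂ) ^ 2 * 2 ^ (2 * n - 1) *
      ∏ j ∈ p.parts.toFinset,
        (c : ℂ) ^ p.parts.count j /
            (((p.parts.count j)! : ℂ) * (j : ℂ) ^ p.parts.count j) *
          pip d f g j ^ p.parts.count j

/-- `K(f,g) = ⟨Ψ(f),Ψ(g)⟩`, the inner product of quadratic exponential vectors. -/
def Kker (c : ℝ) (d : ℕ) (f g : Dom d → ℂ) : ℂ :=
  Complex.exp (-(c / 2 : ℂ) *
    ∫ x : Dom d, Complex.log (1 - 4 * (starRingEnd ℂ) (f x) * g x))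


/-- The indicator function `χ_I` of a set `I ⊆ ℝ^d`, as an element of `𝒜`. -/
def chi (d : ℕ) (I : Set (Dom d)) : Dom d → ℂ := I.indicator 1

/-- `τ(I) = {x : (Tχ_I)(x) ≠ 0}`, the support of `Tχ_I`. -/
def tau (d : ℕ) (T : (Dom d → ℂ) → (Dom d → ℂ)) (I : Set (Dom d)) : Set (Dom d) :=
  {x | T (chi d I) x ≠ 0}

variable {d : ℕ}

lemma memA_chi {I : Set (Dom d)} (hI : MeasurableSet I) (hIfin : volume I < ⊤) :
    MemA d (chi d I) := by
  constructor <;> exact memLp_indicator_const _ hI (1 : ℂ) (Or.inr hIfin.ne)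

lemma MemA.aesm {f : Dom d → ℂ} (hf : MemA d f) :
    AEStronglyMeasurable f (volume : Measure (Dom d)) := hf.1.1

lemma MemA.bound {f : Dom d → ℂ} (hf : MemA d f) :
    ∃ C : ℝ, 0 ≤ C ∧ ∀ᵐ x ∂(volume : Measure (Dom d)), ‖f x‖ ≤ C := by
  refine ⟨(eLpNormEssSup f volume).toReal, ENNReal.toReal_nonneg, ?_⟩
  filter_upwards [ae_le_eLpNormEssSup (f := f) (μ := (volume : Measure (Dom d)))] with x hx
  have hfin : eLpNormEssSup f volume < ⊤ := by
    simpa [eLpNorm_exponent_top] using hf.2.2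
  calc ‖f x‖ = ((‖f x‖₊ : ℝ≥0∞)).toReal := by simp
  _ ≤ (eLpNormEssSup f volume).toReal := ENNReal.toReal_mono hfin.ne hx

lemma MemA.conj {f : Dom d → ℂ} (hf : MemA d f) :
    MemA d (fun x => (starRingEnd ℂ) (f x)) := by
  have hm : AEStronglyMeasurable (fun x => (starRingEnd ℂ) (f x)) (volume : Measure (Dom d)) :=
    Complex.continuous_conj.comp_aestronglyMeasurable hf.1.1
  exact ⟨hf.1.of_le hm (by filter_upwards with x; simp),
    hf.2.of_le hm (by filter_upwards with x; simp)⟩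

lemma MemA.mul {f g : Dom d → ℂ} (hf : MemA d f) (hg : MemA d g) :
    MemA d (fun x => f x * g x) := by
  exact ⟨MemLp.smul (r := 2) hg.1 hf.2, MemLp.smul (r := ⊤) hg.2 hf.2⟩

lemma MemA.pow {f : Dom d → ℂ} (hf : MemA d f) (k : ℕ) (hk : 1 ≤ k) :
    MemA d (fun x => f x ^ k) := by
  induction k with
  | zero => omega
  | succ n ih =>
    rcases Nat.eq_zero_or_pos n with h | h
    · subst h; simpa [pow_one] using hf
    · have := (ih h).mul hf
      refine ⟨(this.1.ae_eq ?_), (this.2.ae_eq ?_)⟩ <;>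
      · filter_upwards with x; ring

lemma MemA.integrable_mul {f g : Dom d → ℂ} (hf : MemA d f) (hg : MemA d g) :
    Integrable (fun x => f x * g x) (volume : Measure (Dom d)) := by
  rw [← memLp_one_iff_integrable]
  have : (1 : ℝ≥0∞) / 1 = 1 / 2 + 1 / 2 := by
    rw [ENNReal.div_add_div_same, one_add_one_eq_two, ENNReal.div_self two_ne_zero ENNReal.ofNat_ne_top, one_div_one]
  exact MemLp.smul (𝕜 := ℂ) (r := 1) hg.1 hf.1

lemma pip_chi {I J : Set (Dom d)} (hI : MeasurableSet I) (hJ : MeasurableSet J)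
    {k : ℕ} (hk : 1 ≤ k) :
    pip d (chi d I) (chi d J) k = (((volume : Measure (Dom d)) (I ∩ J)).toReal : ℂ) := by
  have hptw : ∀ x, (starRingEnd ℂ) (chi d I x) ^ k * chi d J x ^ k
      = (I ∩ J).indicator (fun _ => (1:ℂ)) x := by
    intro x
    by_cases hxI : x ∈ I <;> by_cases hxJ : x ∈ J <;>
      simp [chi, Set.indicator, hxI, hxJ, zero_pow (by omega : k ≠ 0)]
  rw [pip]
  simp_rw [hptw]
  rw [integral_indicator_const (1:ℂ) (hI.inter hJ)]
  simp
  rfl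

lemma norm01 (T : (Dom d → ℂ) → (Dom d → ℂ))
    (hTmem : ∀ f, MemA d f → MemA d (T f))
    (hppip : ∀ k : ℕ, 1 ≤ k → ∀ f g, MemA d f → MemA d g →
      pip d (T f) (T g) k = pip d f g k)
    {I : Set (Dom d)} (hI : MeasurableSet I) (hIfin : volume I < ⊤) :
    ∀ᵐ x ∂(volume : Measure (Dom d)), T (chi d I) x = 0 ∨ ‖T (chi d I) x‖ = 1 := by
  set u := T (chi d I) with hu
  have hmem : MemA d u := hTmem _ (memA_chi hI hIfin)
  set c := ((volume : Measure (Dom d)) I).toReal with hc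
  set w : Dom d → ℝ := fun x => ‖u x‖ ^ 2 with hw
  have hwint : ∀ k : ℕ, 1 ≤ k → Integrable (fun x => w x ^ k) (volume : Measure (Dom d)) ∧
      ∫ x, w x ^ k ∂(volume : Measure (Dom d)) = c := by
    intro k hk
    have hint : Integrable (fun x => (starRingEnd ℂ) (u x) ^ k * u x ^ k)
        (volume : Measure (Dom d)) :=
      (hmem.conj.pow k hk).integrable_mul (hmem.pow k hk)
    have hptw : ∀ x, (starRingEnd ℂ) (u x) ^ k * u x ^ k = ((w x ^ k : ℝ) : ℂ) := by
      intro x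
      rw [← mul_pow, ← Complex.normSq_eq_conj_mul_self, hw]
      push_cast
      norm_cast
      rw [Complex.sq_norm]
    have hre : (fun x => w x ^ k) =
        fun x => RCLike.re ((starRingEnd ℂ) (u x) ^ k * u x ^ k) := by
      funext x; rw [hptw x]; rfl
    have hintr : Integrable (fun x => w x ^ k) (volume : Measure (Dom d)) := by
      rw [hre]; exact hint.re
    refine ⟨hintr, ?_⟩
    have hpipc : pip d u u k = (c : ℂ) := by
      rw [hu, hppip k hk _ _ (memA_chi hI hIfin) (memA_chi hI hIfin),
        pip_chi hI hI hk, Set.inter_self]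
    have : pip d u u k = ((∫ x, w x ^ k ∂(volume : Measure (Dom d)) : ℝ) : ℂ) := by
      rw [pip]
      simp_rw [hptw]
      exact integral_ofReal
    rw [this] at hpipc
    exact_mod_cast hpipc
  have h1 := hwint 1 le_rfl
  have h2 := hwint 2 (by norm_num)
  have h3 := hwint 3 (by norm_num)
  have hfeq : (fun x => w x * (w x - 1) ^ 2) =
      fun x => w x ^ 3 - 2 * w x ^ 2 + w x ^ 1 := by funext x; ring
  have hint : Integrable (fun x => w x * (w x - 1) ^ 2) (volume : Measure (Dom d)) := by
    rw [hfeq]; exact (h3.1.sub (h2.1.const_mul 2)).add h1.1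
  have hsub : Integrable (fun x => w x ^ 3 - 2 * w x ^ 2) (volume : Measure (Dom d)) :=
    h3.1.sub (h2.1.const_mul 2)
  have hz : ∫ x, w x * (w x - 1) ^ 2 ∂(volume : Measure (Dom d)) = 0 := by
    rw [hfeq, integral_add hsub h1.1,
      integral_sub h3.1 (h2.1.const_mul 2), integral_const_mul, h1.2, h2.2, h3.2]
    ring
  have hkey : (fun x => w x * (w x - 1) ^ 2) =ᵐ[(volume : Measure (Dom d))] 0 :=
    (integral_eq_zero_iff_of_nonneg
      (fun x => mul_nonneg (by positivity) (sq_nonneg _)) hint).mp hz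
  filter_upwards [hkey] with x hx
  rcases mul_eq_zero.mp hx with h | h
  · left
    have : ‖u x‖ = 0 := by
      have := h
      simp only [hw] at this
      nlinarith [norm_nonneg (u x)]
    exact norm_eq_zero.mp this
  · right
    have hw1 : w x = 1 := by nlinarith [sq_nonneg (w x - 1)]
    have : ‖u x‖ ^ 2 = 1 := hw1
    rw [← Real.sqrt_sq (norm_nonneg (u x)), this, Real.sqrt_one]

lemma T_chi_empty (T : (Dom d → ℂ) → (Dom d → ℂ))
    (hTsmul : ∀ (a : ℂ) (f : Dom d → ℂ), MemA d f →
      T (a • f) =ᵐ[(volume : Measure (Dom d))] a • T f) :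
    T (chi d (∅ : Set (Dom d))) =ᵐ[(volume : Measure (Dom d))] 0 := by
  have hmem : MemA d (chi d (∅ : Set (Dom d))) :=
    memA_chi MeasurableSet.empty (by simp)
  have h00 : (0 : ℂ) • chi d (∅ : Set (Dom d)) = chi d (∅ : Set (Dom d)) := by
    funext x; simp [chi]
  have := hTsmul 0 (chi d (∅ : Set (Dom d))) hmem
  rw [h00] at this
  filter_upwards [this] with x hx
  simpa using hx

lemma chi_union {A B : Set (Dom d)} (hAB : Disjoint A B) :
    chi d (A ∪ B) = chi d A + chi d B := by
  simp only [chi]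
  rw [Set.indicator_union_of_disjoint hAB]
  rfl

lemma T_chi_union (T : (Dom d → ℂ) → (Dom d → ℂ))
    (hTadd : ∀ f g, MemA d f → MemA d g →
      T (f + g) =ᵐ[(volume : Measure (Dom d))] T f + T g)
    {A B : Set (Dom d)} (hA : MeasurableSet A) (hB : MeasurableSet B)
    (hAfin : volume A < ⊤) (hBfin : volume B < ⊤) (hAB : Disjoint A B) :
    T (chi d (A ∪ B)) =ᵐ[(volume : Measure (Dom d))]
      fun x => T (chi d A) x + T (chi d B) x := by
  have := hTadd (chi d A) (chi d B) (memA_chi hA hAfin) (memA_chi hB hBfin)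
  rw [← chi_union hAB] at this
  filter_upwards [this] with x hx
  simpa using hx

lemma supp_disjoint (T : (Dom d → ℂ) → (Dom d → ℂ))
    (hTmem : ∀ f, MemA d f → MemA d (T f))
    (hTadd : ∀ f g, MemA d f → MemA d g →
      T (f + g) =ᵐ[(volume : Measure (Dom d))] T f + T g)
    (hppip : ∀ k : ℕ, 1 ≤ k → ∀ f g, MemA d f → MemA d g →
      pip d (T f) (T g) k = pip d f g k)
    {A B : Set (Dom d)} (hA : MeasurableSet A) (hB : MeasurableSet B)
    (hAfin : volume A < ⊤) (hBfin : volume B < ⊤) (hAB : Disjoint A B) :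
    ∀ᵐ x ∂(volume : Measure (Dom d)), T (chi d A) x = 0 ∨ T (chi d B) x = 0 := by
  set a := T (chi d A) with ha
  set b := T (chi d B) with hb
  have hmA : MemA d a := hTmem _ (memA_chi hA hAfin)
  have hmB : MemA d b := hTmem _ (memA_chi hB hBfin)
  have hABempty : A ∩ B = ∅ := Set.disjoint_iff_inter_eq_empty.mp hAB
  have hpip0 : ∀ k : ℕ, 1 ≤ k →
      ∫ x, (starRingEnd ℂ) (a x) ^ k * b x ^ k ∂(volume : Measure (Dom d)) = 0 := by
    intro k hk
    have : pip d a b k = pip d (chi d A) (chi d B) k :=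
      hppip k hk _ _ (memA_chi hA hAfin) (memA_chi hB hBfin)
    rw [pip_chi hA hB hk, hABempty] at this
    simpa [pip] using this
  have hz1 : Integrable (fun x => (starRingEnd ℂ) (a x) * b x) (volume : Measure (Dom d)) :=
    hmA.conj.integrable_mul hmB
  have hz2 : Integrable (fun x => (starRingEnd ℂ) (a x) ^ 2 * b x ^ 2)
      (volume : Measure (Dom d)) :=
    (hmA.conj.pow 2 (by norm_num)).integrable_mul (hmB.pow 2 (by norm_num))
  set q : Dom d → ℂ := fun x =>
    (starRingEnd ℂ) (a x) ^ 2 * b x ^ 2 - 2 * ((starRingEnd ℂ) (a x) * b x) with hq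
  have hqint : Integrable q (volume : Measure (Dom d)) := hz2.sub (hz1.const_mul 2)
  have hqz : ∫ x, q x ∂(volume : Measure (Dom d)) = 0 := by
    rw [hq]
    have h1' : ∫ x, (starRingEnd ℂ) (a x) * b x ∂(volume : Measure (Dom d)) = 0 := by
      have := hpip0 1 le_rfl
      simpa [pow_one] using this
    rw [integral_sub hz2 (hz1.const_mul 2), integral_const_mul, hpip0 2 (by norm_num), h1']
    simp
  have hrint : Integrable (fun x => (q x).re) (volume : Measure (Dom d)) := hqint.re
  have hrz : ∫ x, (q x).re ∂(volume : Measure (Dom d)) = 0 := by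
    have := integral_re (μ := (volume : Measure (Dom d))) hqint
    rw [hqz] at this
    simpa using this
  have hptA := norm01 T hTmem hppip hA hAfin
  have hptB := norm01 T hTmem hppip hB hBfin
  have hptU := norm01 T hTmem hppip (hA.union hB)
    (lt_of_le_of_lt (measure_union_le A B) (ENNReal.add_lt_top.mpr ⟨hAfin, hBfin⟩))
  have hptAdd := T_chi_union T hTadd hA hB hAfin hBfin hAB
  have hnn : ∀ᵐ x ∂(volume : Measure (Dom d)),
      0 ≤ (q x).re ∧ (a x ≠ 0 → b x ≠ 0 → (1:ℝ)/2 ≤ (q x).re) := by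
    filter_upwards [hptA, hptB, hptU, hptAdd] with x hxA hxB hxU hxAdd
    by_cases haz : a x = 0
    · simp [hq, haz]
    by_cases hbz : b x = 0
    · simp [hq, hbz]
    have hna : ‖a x‖ = 1 := hxA.resolve_left haz
    have hnb : ‖b x‖ = 1 := hxB.resolve_left hbz
    set z : ℂ := (starRingEnd ℂ) (a x) * b x with hz
    have hnz : Complex.normSq z = 1 := by
      have habs : ‖z‖ = 1 := by
        rw [hz, norm_mul, Complex.norm_conj,
          hna, hnb]
        norm_num
      rw [← Complex.sq_norm, habs]; norm_num
    have hsum : Complex.normSq (a x + b x) = 2 + 2 * z.re := by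
      rw [Complex.normSq_add]
      have h1 : Complex.normSq (a x) = 1 := by
        rw [← Complex.sq_norm, hna]; norm_num
      have h2 : Complex.normSq (b x) = 1 := by
        rw [← Complex.sq_norm, hnb]; norm_num
      have h3 : (a x * (starRingEnd ℂ) (b x)).re = z.re := by
        rw [hz]
        have : (starRingEnd ℂ) (a x) * b x =
            (starRingEnd ℂ) (a x * (starRingEnd ℂ) (b x)) := by
          rw [map_mul]; simp
        rw [this, Complex.conj_re]
      rw [h1, h2, h3]; ring
    have hre_le : z.re ≤ -(1/2 : ℝ) := by
      rcases hxU with hU0 | hU1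
      · have : a x + b x = 0 := by rw [hxAdd] at hU0; exact hU0
        have : Complex.normSq (a x + b x) = 0 := by rw [this]; simp
        rw [hsum] at this; linarith
      · have : ‖T (chi d (A ∪ B)) x‖ = ‖a x + b x‖ := by rw [hxAdd]
        rw [this] at hU1
        have : Complex.normSq (a x + b x) = 1 := by
          rw [← Complex.sq_norm, hU1]; norm_num
        rw [hsum] at this; linarith
    have hqre : (q x).re = 2 * z.re ^ 2 - 1 - 2 * z.re := by
      have hq2 : q x = z ^ 2 - 2 * z := by rw [hq, hz]; ring
      have : (z ^ 2).re = z.re ^ 2 - z.im ^ 2 := by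
        rw [sq, Complex.mul_re]; ring
      rw [hq2, Complex.sub_re, Complex.mul_re, this]
      have him : z.im ^ 2 = 1 - z.re ^ 2 := by
        have := hnz
        rw [Complex.normSq_apply] at this
        nlinarith
      rw [him]; simp; ring
    constructor
    · rw [hqre]; nlinarith
    · intro _ _
      rw [hqre]; nlinarith
  have hr0 : (fun x => (q x).re) =ᵐ[(volume : Measure (Dom d))] 0 := by
    refine (integral_eq_zero_iff_of_nonneg_ae ?_ hrint).mp hrz
    filter_upwards [hnn] with x hx using hx.1
  filter_upwards [hr0, hnn] with x hx0 hx
  by_contra hcon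
  push_neg at hcon
  have := hx.2 hcon.1 hcon.2
  simp only [Pi.zero_apply] at hx0
  rw [hx0] at this
  norm_num at this

lemma supp_add (T : (Dom d → ℂ) → (Dom d → ℂ))
    (hTmem : ∀ f, MemA d f → MemA d (T f))
    (hTadd : ∀ f g, MemA d f → MemA d g →
      T (f + g) =ᵐ[(volume : Measure (Dom d))] T f + T g)
    (hppip : ∀ k : ℕ, 1 ≤ k → ∀ f g, MemA d f → MemA d g →
      pip d (T f) (T g) k = pip d f g k)
    {A B : Set (Dom d)} (hA : MeasurableSet A) (hB : MeasurableSet B)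
    (hAfin : volume A < ⊤) (hBfin : volume B < ⊤) (hAB : Disjoint A B) :
    ∀ᵐ x ∂(volume : Measure (Dom d)),
      T (chi d A) x ≠ 0 → T (chi d (A ∪ B)) x = T (chi d A) x := by
  filter_upwards [T_chi_union T hTadd hA hB hAfin hBfin hAB,
    supp_disjoint T hTmem hTadd hppip hA hB hAfin hBfin hAB] with x hadd hdisj hax
  rcases hdisj with h | h
  · exact absurd h hax
  · rw [hadd, h, add_zero]

lemma integral_sq_norm (T : (Dom d → ℂ) → (Dom d → ℂ))
    (hTmem : ∀ f, MemA d f → MemA d (T f))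
    (hppip : ∀ k : ℕ, 1 ≤ k → ∀ f g, MemA d f → MemA d g →
      pip d (T f) (T g) k = pip d f g k)
    {I : Set (Dom d)} (hI : MeasurableSet I) (hIfin : volume I < ⊤) :
    ∫ x, ‖T (chi d I) x‖ ^ 2 ∂(volume : Measure (Dom d)) =
      ((volume : Measure (Dom d)) I).toReal := by
  set u := T (chi d I) with hu
  have hptw : ∀ x, (starRingEnd ℂ) (u x) ^ 1 * u x ^ 1 = ((‖u x‖ ^ 2 : ℝ) : ℂ) := by
    intro x
    rw [← mul_pow, ← Complex.normSq_eq_conj_mul_self]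
    push_cast
    norm_cast
    rw [pow_one, Complex.sq_norm]
  have hpipc : pip d u u 1 = (((volume : Measure (Dom d)) I).toReal : ℂ) := by
    rw [hu, hppip 1 le_rfl _ _ (memA_chi hI hIfin) (memA_chi hI hIfin),
      pip_chi hI hI le_rfl, Set.inter_self]
  have : pip d u u 1 = ((∫ x, ‖u x‖ ^ 2 ∂(volume : Measure (Dom d)) : ℝ) : ℂ) := by
    rw [pip]
    simp_rw [hptw]
    exact integral_ofReal
  rw [this] at hpipc
  exact_mod_cast hpipc

lemma phase_eq (T : (Dom d → ℂ) → (Dom d → ℂ))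
    (hTmem : ∀ f, MemA d f → MemA d (T f))
    (hTadd : ∀ f g, MemA d f → MemA d g →
      T (f + g) =ᵐ[(volume : Measure (Dom d))] T f + T g)
    (hppip : ∀ k : ℕ, 1 ≤ k → ∀ f g, MemA d f → MemA d g →
      pip d (T f) (T g) k = pip d f g k)
    {I J : Set (Dom d)} (hI : MeasurableSet I) (hJ : MeasurableSet J)
    (hIfin : volume I < ⊤) (hJfin : volume J < ⊤) :
    ∀ᵐ x ∂(volume : Measure (Dom d)),
      T (chi d I) x ≠ 0 → T (chi d J) x ≠ 0 → T (chi d I) x = T (chi d J) x := by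
  have h1m : MeasurableSet (I ∩ J) := hI.inter hJ
  have h2m : MeasurableSet (I \ J) := hI.diff hJ
  have h3m : MeasurableSet (J \ I) := hJ.diff hI
  have h1f : volume (I ∩ J) < ⊤ :=
    lt_of_le_of_lt (measure_mono Set.inter_subset_left) hIfin
  have h2f : volume (I \ J) < ⊤ :=
    lt_of_le_of_lt (measure_mono Set.diff_subset) hIfin
  have h3f : volume (J \ I) < ⊤ :=
    lt_of_le_of_lt (measure_mono Set.diff_subset) hJfin
  have d12 : Disjoint (I ∩ J) (I \ J) := by
    rw [Set.disjoint_left]; rintro x ⟨hxI, hxJ⟩ ⟨-, hnJ⟩; exact hnJ hxJ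
  have d13 : Disjoint (I ∩ J) (J \ I) := by
    rw [Set.disjoint_left]; rintro x ⟨hxI, hxJ⟩ ⟨-, hnI⟩; exact hnI hxI
  have d23 : Disjoint (I \ J) (J \ I) := by
    rw [Set.disjoint_left]; rintro x ⟨hxI, -⟩ ⟨-, hnI⟩; exact hnI hxI
  have hUI : I ∩ J ∪ I \ J = I := Set.inter_union_diff I J
  have hUJ : I ∩ J ∪ J \ I = J := by
    rw [Set.inter_comm]; exact Set.inter_union_diff J I
  have e1 := supp_add T hTmem hTadd hppip h1m h2m h1f h2f d12
  rw [hUI] at e1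
  have e2 := supp_add T hTmem hTadd hppip h1m h3m h1f h3f d13
  rw [hUJ] at e2
  have b1 := T_chi_union T hTadd h1m h2m h1f h2f d12
  rw [hUI] at b1
  have b2 := T_chi_union T hTadd h1m h3m h1f h3f d13
  rw [hUJ] at b2
  have d23f := supp_disjoint T hTmem hTadd hppip h2m h3m h2f h3f d23
  filter_upwards [e1, e2, b1, b2, d23f] with x he1 he2 hb1 hb2 hd hxI hxJ
  by_cases hz : T (chi d (I ∩ J)) x = 0
  · exfalso
    rw [hb1, hz, zero_add] at hxI
    rw [hb2, hz, zero_add] at hxJ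
    rcases hd with h | h
    · exact hxI h
    · exact hxJ h
  · rw [he1 hz, he2 hz]

lemma measure_support (T : (Dom d → ℂ) → (Dom d → ℂ))
    (hTmem : ∀ f, MemA d f → MemA d (T f))
    (hppip : ∀ k : ℕ, 1 ≤ k → ∀ f g, MemA d f → MemA d g →
      pip d (T f) (T g) k = pip d f g k)
    {I : Set (Dom d)} (hI : MeasurableSet I) (hIfin : volume I < ⊤)
    {v : Dom d → ℂ} (hv : T (chi d I) =ᵐ[(volume : Measure (Dom d))] v)
    (hvm : Measurable v) :
    volume {x | v x ≠ 0} = volume I ∧ volume {x | T (chi d I) x ≠ 0} = volume I := by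
  set u := T (chi d I) with hu
  have hmem : MemA d u := hTmem _ (memA_chi hI hIfin)
  have hseteq : {x | u x ≠ 0} =ᵐ[(volume : Measure (Dom d))] {x | v x ≠ 0} := by
    filter_upwards [hv] with x hx
    show (u x ≠ 0) = (v x ≠ 0)
    rw [hx]
  have hmeas : MeasurableSet {x | v x ≠ 0} :=
    (hvm (MeasurableSet.singleton 0)).compl
  have hnormae := norm01 T hTmem hppip hI hIfin
  have key : (fun x => ‖v x‖ ^ 2) =ᵐ[(volume : Measure (Dom d))]
      Set.indicator {x | v x ≠ 0} (fun _ => (1:ℝ)) := by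
    filter_upwards [hv, hnormae] with x hx hn
    rcases hn with h | h
    · have hvx : v x = 0 := by rw [← hx]; exact h
      have : x ∉ {x | v x ≠ 0} := by simp [hvx]
      simp [Set.indicator_of_notMem this, hvx]
    · have hne : v x ≠ 0 := by
        rw [← hx]
        intro h0
        have h0' : T (chi d I) x = 0 := h0
        rw [h0'] at h
        simp at h
      have : x ∈ {x | v x ≠ 0} := hne
      rw [Set.indicator_of_mem this, ← hx, h]
      norm_num
  have hint2 : Integrable (fun x => ‖v x‖ ^ 2) (volume : Measure (Dom d)) := by
    have h0 : Integrable (fun x => ‖u x‖ ^ 2) (volume : Measure (Dom d)) :=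
      (memLp_two_iff_integrable_sq_norm hmem.1.1).mp hmem.1
    exact h0.congr (by filter_upwards [hv] with x hx; rw [hx])
  have hindint : Integrable ({x | v x ≠ 0}.indicator (fun _ => (1:ℝ)))
      (volume : Measure (Dom d)) := hint2.congr key
  have hfin : volume {x | v x ≠ 0} < ⊤ := by
    rw [integrable_indicator_iff hmeas] at hindint
    rcases (integrableOn_const_iff (C := (1:ℝ))).mp hindint with h | h
    · norm_num at h
    · exact h
  have e1 : ∫ x, ‖v x‖ ^ 2 ∂(volume : Measure (Dom d)) =
      (volume {x | v x ≠ 0}).toReal := by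
    rw [integral_congr_ae key, integral_indicator_const (1:ℝ) hmeas]
    simp
    rfl
  have e2 : ∫ x, ‖v x‖ ^ 2 ∂(volume : Measure (Dom d)) =
      ((volume : Measure (Dom d)) I).toReal := by
    rw [← integral_sq_norm T hTmem hppip hI hIfin]
    exact integral_congr_ae (by filter_upwards [hv] with x hx; rw [← hx, hu])
  have hteq : (volume {x | v x ≠ 0}).toReal = ((volume : Measure (Dom d)) I).toReal := by
    rw [← e1, e2]
  have hmeq : volume {x | v x ≠ 0} = volume I :=
    (ENNReal.toReal_eq_toReal_iff' hfin.ne hIfin.ne).mp hteq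
  exact ⟨hmeq, by rw [measure_congr hseteq]; exact hmeq⟩


/-- Lemma 13 of the paper: if the linear map `T : 𝒜 → 𝒜` preserves power
inner products, there is a single measurable phase `α : ℝ^d → ℝ` with
`Tχ_I = e^{iα} χ_{τ(I)}` a.e. and `|τ(I)| = |I|` for every measurable `I` of finite
measure. -/
theorem statement13 (d : ℕ) (hd : 1 ≤ d)
    (T : (Dom d → ℂ) → (Dom d → ℂ))
    (hTmem : ∀ f, MemA d f → MemA d (T f))
    (hTae : ∀ f g, MemA d f → MemA d g → f =ᵐ[(volume : Measure (Dom d))] g →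
      T f =ᵐ[(volume : Measure (Dom d))] T g)
    (hTadd : ∀ f g, MemA d f → MemA d g →
      T (f + g) =ᵐ[(volume : Measure (Dom d))] T f + T g)
    (hTsmul : ∀ (a : ℂ) (f : Dom d → ℂ), MemA d f →
      T (a • f) =ᵐ[(volume : Measure (Dom d))] a • T f)
    (hppip : ∀ k : ℕ, 1 ≤ k → ∀ f g, MemA d f → MemA d g →
      pip d (T f) (T g) k = pip d f g k) :
    ∃ α : Dom d → ℝ, Measurable α ∧
      ∀ I : Set (Dom d), MeasurableSet I → volume I < ⊤ →
        (T (chi d I) =ᵐ[(volume : Measure (Dom d))]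
          fun x => Complex.exp (Complex.I * α x) * chi d (tau d T I) x) ∧
        volume (tau d T I) = volume I := by
  classical
  set S : ℕ → Set (Dom d) := spanningSets (volume : Measure (Dom d)) with hSdef
  set Q : ℕ → Set (Dom d) := disjointed S with hQdef
  have hSm : ∀ n, MeasurableSet (S n) := fun n => measurableSet_spanningSets volume n
  have hSmono : Monotone S := monotone_spanningSets volume
  have hQm : ∀ n, MeasurableSet (Q n) := MeasurableSet.disjointed hSm
  have hQsub : ∀ n, Q n ⊆ S n := fun n => disjointed_subset S n
  have hSfin : ∀ n, volume (S n) < ⊤ := fun n => measure_spanningSets_lt_top volume n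
  have hQfin : ∀ n, volume (Q n) < ⊤ := fun n =>
    lt_of_le_of_lt (measure_mono (hQsub n)) (hSfin n)
  have hgex : ∀ n : ℕ, ∃ gg : Dom d → ℂ, Measurable gg ∧
      T (chi d (Q n)) =ᵐ[(volume : Measure (Dom d))] gg := by
    intro n
    have h := (hTmem _ (memA_chi (hQm n) (hQfin n))).1.1
    exact ⟨h.mk _, h.stronglyMeasurable_mk.measurable, h.ae_eq_mk⟩
  choose g hgm hgae using hgex
  set E : ℕ → Set (Dom d) := fun n => {x | g n x ≠ 0 ∧ ∀ m, m < n → g m x = 0} with hE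
  have hEuniq : ∀ {n m : ℕ} {x : Dom d}, x ∈ E n → x ∈ E m → n = m := by
    intro n m x hn hm
    by_contra hne
    rcases Nat.lt_or_ge n m with h | h
    · exact hn.1 (hm.2 n h)
    · exact hm.1 (hn.2 m (by omega))
  have hEm : ∀ n, MeasurableSet (E n) := by
    intro n
    have h1 : MeasurableSet {x : Dom d | g n x ≠ 0} :=
      (hgm n (MeasurableSet.singleton 0)).compl
    have h2 : MeasurableSet {x : Dom d | ∀ m, m < n → g m x = 0} := by
      have he : {x : Dom d | ∀ m, m < n → g m x = 0}
          = ⋂ m ∈ Set.Iio n, {x : Dom d | g m x = 0} := by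
        ext x; simp [Set.mem_Iio]
      rw [he]
      exact MeasurableSet.biInter (Set.to_countable _)
        (fun m _ => hgm m (MeasurableSet.singleton 0))
    exact h1.inter h2
  set hfun : Dom d → ℂ :=
    fun x => if h : ∃ n, x ∈ E n then g (Nat.find h) x else 0 with hhfun
  have hfun_eq : ∀ {n : ℕ} {x : Dom d}, x ∈ E n → hfun x = g n x := by
    intro n x hx
    have hex : ∃ m, x ∈ E m := ⟨n, hx⟩
    rw [hhfun]
    simp only [dif_pos hex]
    rw [hEuniq (Nat.find_spec hex) hx]
  have hfm : Measurable hfun := by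
    apply measurable_of_tendsto_metrizable
      (f := fun N x => ∑ n ∈ Finset.range N, (E n).indicator (g n) x)
      (fun N => Finset.measurable_sum _ fun n _ => (hgm n).indicator (hEm n))
    rw [tendsto_pi_nhds]
    intro x
    by_cases hx : ∃ n, x ∈ E n
    · apply tendsto_atTop_of_eventually_const (i₀ := Nat.find hx + 1)
      intro N hN
      rw [hfun_eq (Nat.find_spec hx)]
      rw [Finset.sum_eq_single_of_mem (Nat.find hx) (Finset.mem_range.mpr (by omega))]
      · exact Set.indicator_of_mem (Nat.find_spec hx) _
      · intro b _ hb
        exact Set.indicator_of_notMem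
          (fun hbE => hb (hEuniq hbE (Nat.find_spec hx))) _
    · apply tendsto_atTop_of_eventually_const (i₀ := 0)
      intro N _
      rw [hhfun]
      simp only [dif_neg hx]
      exact Finset.sum_eq_zero fun n _ =>
        Set.indicator_of_notMem (fun h => hx ⟨n, h⟩) _
  refine ⟨fun x => (hfun x).arg, Complex.measurable_arg.comp hfm, ?_⟩
  intro I hI hIfin
  obtain ⟨ub, hubm, hub⟩ : ∃ ub : Dom d → ℂ, Measurable ub ∧
      T (chi d I) =ᵐ[(volume : Measure (Dom d))] ub := by
    have h := (hTmem _ (memA_chi hI hIfin)).1.1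
    exact ⟨h.mk _, h.stronglyMeasurable_mk.measurable, h.ae_eq_mk⟩
  have hms := measure_support T hTmem hppip hI hIfin hub hubm
  have hGm : ∀ m, ∀ᵐ x ∂(volume : Measure (Dom d)),
      T (chi d (I ∩ Q m)) x ≠ 0 → g m x ≠ 0 := by
    intro m
    have hun : (I ∩ Q m) ∪ (Q m \ I) = Q m := by
      rw [Set.inter_comm]; exact Set.inter_union_diff (Q m) I
    have hd' : Disjoint (I ∩ Q m) (Q m \ I) := by
      rw [Set.disjoint_left]; rintro x ⟨hxI, hxQ⟩ ⟨-, hnI⟩; exact hnI hxI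
    have hsa := supp_add T hTmem hTadd hppip (hI.inter (hQm m)) ((hQm m).diff hI)
      (lt_of_le_of_lt (measure_mono Set.inter_subset_right) (hQfin m))
      (lt_of_le_of_lt (measure_mono Set.diff_subset) (hQfin m)) hd'
    rw [hun] at hsa
    filter_upwards [hsa, hgae m] with x h1 h2 h3
    rw [← h2, h1 h3]
    exact h3
  have hP : ∀ n, ∀ᵐ x ∂(volume : Measure (Dom d)),
      T (chi d (I ∩ S n)) x ≠ 0 → ∃ m, g m x ≠ 0 := by
    intro n
    induction n with
    | zero =>
      have hQ0 : Q 0 = S 0 := by rw [hQdef]; exact disjointed_zero S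
      rw [← hQ0]
      filter_upwards [hGm 0] with x hx hne
      exact ⟨0, hx hne⟩
    | succ n ih =>
      have hq : Q (n + 1) = S (n + 1) \ S n := by
        rw [hQdef]; exact hSmono.disjointed_succ (not_isMax n)
      have hsplit : I ∩ S (n + 1) = (I ∩ S n) ∪ (I ∩ Q (n + 1)) := by
        rw [← Set.inter_union_distrib_left]
        congr 1
        rw [hq, Set.union_diff_cancel (hSmono (Nat.le_succ n))]
      have hdisj : Disjoint (I ∩ S n) (I ∩ Q (n + 1)) := by
        rw [Set.disjoint_left]; rintro x ⟨hxI, hxS⟩ ⟨-, hxQ⟩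
        rw [hq] at hxQ; exact hxQ.2 hxS
      have hu := T_chi_union T hTadd (hI.inter (hSm n)) (hI.inter (hQm (n + 1)))
        (lt_of_le_of_lt (measure_mono Set.inter_subset_left) hIfin)
        (lt_of_le_of_lt (measure_mono Set.inter_subset_left) hIfin) hdisj
      rw [← hsplit] at hu
      filter_upwards [ih, hGm (n + 1), hu] with x h1 h2 h3 hne
      rw [h3] at hne
      by_cases hz : T (chi d (I ∩ S n)) x = 0
      · rw [hz, zero_add] at hne
        exact ⟨n + 1, h2 hne⟩
      · exact h1 hz
  obtain ⟨v, hvm, hvae⟩ : ∃ v : ℕ → Dom d → ℂ, (∀ n, Measurable (v n)) ∧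
      ∀ n, T (chi d (I ∩ S n)) =ᵐ[(volume : Measure (Dom d))] v n := by
    have hvex : ∀ n : ℕ, ∃ vv : Dom d → ℂ, Measurable vv ∧
        T (chi d (I ∩ S n)) =ᵐ[(volume : Measure (Dom d))] vv := by
      intro n
      have h := (hTmem _ (memA_chi (hI.inter (hSm n))
        (lt_of_le_of_lt (measure_mono Set.inter_subset_left) hIfin))).1.1
      exact ⟨h.mk _, h.stronglyMeasurable_mk.measurable, h.ae_eq_mk⟩
    choose v h1 h2 using hvex
    exact ⟨v, h1, h2⟩
  have hsub1 : ∀ n, ∀ᵐ x ∂(volume : Measure (Dom d)), v n x ≠ 0 → ub x ≠ 0 := by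
    intro n
    have hun : (I ∩ S n) ∪ (I \ S n) = I := Set.inter_union_diff I (S n)
    have hd' : Disjoint (I ∩ S n) (I \ S n) := by
      rw [Set.disjoint_left]; rintro x ⟨hxI, hxS⟩ ⟨-, hnS⟩; exact hnS hxS
    have hsa := supp_add T hTmem hTadd hppip (hI.inter (hSm n)) (hI.diff (hSm n))
      (lt_of_le_of_lt (measure_mono Set.inter_subset_left) hIfin)
      (lt_of_le_of_lt (measure_mono Set.diff_subset) hIfin) hd'
    rw [hun] at hsa
    filter_upwards [hsa, hvae n, hub] with x h1 h2 h3 hne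
    have hTn : T (chi d (I ∩ S n)) x ≠ 0 := by rw [h2]; exact hne
    rw [← h3, h1 hTn, h2]
    exact hne
  have hsub2 : ∀ n, ∀ᵐ x ∂(volume : Measure (Dom d)), v n x ≠ 0 → ∃ m, g m x ≠ 0 := by
    intro n
    filter_upwards [hP n, hvae n] with x h1 h2 hne
    exact h1 (by rw [h2]; exact hne)
  set Bset : Set (Dom d) := {x | ub x ≠ 0} \ ⋃ m, {x | g m x ≠ 0} with hBset
  have hmub : volume {x | ub x ≠ 0} = volume I := hms.1
  have hmv : ∀ n, volume {x | v n x ≠ 0} = volume (I ∩ S n) := fun n =>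
    (measure_support T hTmem hppip (hI.inter (hSm n))
      (lt_of_le_of_lt (measure_mono Set.inter_subset_left) hIfin) (hvae n) (hvm n)).1
  have hBbound : ∀ n, volume Bset ≤ volume I - volume (I ∩ S n) := by
    intro n
    set t' : Set (Dom d) := {x | v n x ≠ 0} ∩ {x | ub x ≠ 0} with ht'
    have ht'm : MeasurableSet t' :=
      ((hvm n (MeasurableSet.singleton 0)).compl).inter
        ((hubm (MeasurableSet.singleton 0)).compl)
    have ht'fin : volume t' ≠ ⊤ := by
      refine (lt_of_le_of_lt (measure_mono Set.inter_subset_left) ?_).ne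
      rw [hmv n]
      exact lt_of_le_of_lt (measure_mono Set.inter_subset_left) hIfin
    have hnull : volume ({x | v n x ≠ 0} \ t') = 0 := by
      refine measure_mono_null ?_ (ae_iff.mp (hsub1 n))
      rintro x ⟨hv, hnt⟩
      intro himp
      exact hnt ⟨hv, himp hv⟩
    have ht'v : volume t' = volume (I ∩ S n) := by
      refine le_antisymm (le_trans (measure_mono Set.inter_subset_left) (hmv n).le) ?_
      calc volume (I ∩ S n) = volume {x | v n x ≠ 0} := (hmv n).symm
      _ ≤ volume t' + volume ({x | v n x ≠ 0} \ t') := by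
          have he : {x | v n x ≠ 0} \ t' = {x | v n x ≠ 0} \ {x | ub x ≠ 0} := by
            rw [ht']
            ext y
            simp only [Set.mem_diff, Set.mem_inter_iff, Set.mem_setOf_eq]
            tauto
          rw [he]
          exact measure_le_inter_add_diff (volume : Measure (Dom d)) _ _
      _ = volume t' := by rw [hnull, add_zero]
    have hdiffeq : {x | ub x ≠ 0} \ {x | v n x ≠ 0} = {x | ub x ≠ 0} \ t' := by
      rw [ht', Set.diff_inter_self_eq_diff]
    have hle : Bset ≤ᵐ[(volume : Measure (Dom d))]
        ({x | ub x ≠ 0} \ {x | v n x ≠ 0} : Set (Dom d)) := by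
      filter_upwards [hsub2 n] with x hx hxB
      refine ⟨hxB.1, fun hv => ?_⟩
      obtain ⟨m, hm⟩ := hx hv
      exact hxB.2 (Set.mem_iUnion.mpr ⟨m, hm⟩)
    calc volume Bset ≤ volume ({x | ub x ≠ 0} \ {x | v n x ≠ 0}) := measure_mono_ae hle
    _ = volume ({x | ub x ≠ 0} \ t') := by rw [hdiffeq]
    _ = volume {x | ub x ≠ 0} - volume t' :=
      measure_diff Set.inter_subset_right ht'm.nullMeasurableSet ht'fin
    _ = volume I - volume (I ∩ S n) := by rw [hmub, ht'v]
  have htend : Filter.Tendsto (fun n => volume (I ∩ S n)) Filter.atTop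
      (nhds (volume I)) := by
    have hmon : Monotone fun n => I ∩ S n := fun a b h =>
      Set.inter_subset_inter_right I (hSmono h)
    have h := tendsto_measure_iUnion_atTop (μ := (volume : Measure (Dom d))) hmon
    have hun : (⋃ n, I ∩ S n) = I := by
      rw [← Set.inter_iUnion, hSdef, iUnion_spanningSets, Set.inter_univ]
    rw [hun] at h
    exact h
  have hB0 : volume Bset = 0 := by
    have h0 : Filter.Tendsto (fun n => volume I - volume (I ∩ S n)) Filter.atTop
        (nhds 0) := by
      have h := ENNReal.Tendsto.sub (tendsto_const_nhds (x := volume I)) htend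
        (Or.inl hIfin.ne)
      simpa using h
    exact le_antisymm (ge_of_tendsto h0 (Filter.Eventually.of_forall hBbound)) zero_le
  have hcov : ∀ᵐ x ∂(volume : Measure (Dom d)),
      T (chi d I) x ≠ 0 → ∃ m, g m x ≠ 0 := by
    filter_upwards [hub, measure_eq_zero_iff_ae_notMem.mp hB0] with x h1 h2 hne
    have hubne : ub x ≠ 0 := by rw [← h1]; exact hne
    by_contra hcon
    push_neg at hcon
    apply h2
    refine ⟨hubne, fun hmem => ?_⟩
    obtain ⟨m, hm⟩ := Set.mem_iUnion.mp hmem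
    exact hm (hcon m)
  refine ⟨?_, hms.2⟩
  have hphase : ∀ n, ∀ᵐ x ∂(volume : Measure (Dom d)),
      T (chi d I) x ≠ 0 → T (chi d (Q n)) x ≠ 0 →
        T (chi d I) x = T (chi d (Q n)) x := fun n =>
    phase_eq T hTmem hTadd hppip hI (hQm n) hIfin (hQfin n)
  have hn01 : ∀ n, ∀ᵐ x ∂(volume : Measure (Dom d)),
      T (chi d (Q n)) x = 0 ∨ ‖T (chi d (Q n)) x‖ = 1 := fun n =>
    norm01 T hTmem hppip (hQm n) (hQfin n)
  filter_upwards [ae_all_iff.mpr hphase, ae_all_iff.mpr hgae,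
    ae_all_iff.mpr hn01, hcov] with x h1 h2 h3 h4
  show T (chi d I) x = Complex.exp (Complex.I * ((hfun x).arg : ℝ)) * chi d (tau d T I) x
  by_cases h0 : T (chi d I) x = 0
  · have hnt : x ∉ tau d T I := by simp [tau, h0]
    have hc0 : chi d (tau d T I) x = 0 := by
      simp only [chi]; exact Set.indicator_of_notMem hnt _
    rw [h0, hc0, mul_zero]
  · have hxt : x ∈ tau d T I := h0
    have hc1 : chi d (tau d T I) x = 1 := by
      simp only [chi]; rw [Set.indicator_of_mem hxt]; rfl
    rw [hc1, mul_one]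
    have hex : ∃ m, g m x ≠ 0 := h4 h0
    have hgn0 : g (Nat.find hex) x ≠ 0 := Nat.find_spec hex
    have hxE : x ∈ E (Nat.find hex) :=
      ⟨hgn0, fun m hm => not_not.mp (Nat.find_min hex hm)⟩
    have hTQ : T (chi d (Q (Nat.find hex))) x = g (Nat.find hex) x := h2 _
    have hTQne : T (chi d (Q (Nat.find hex))) x ≠ 0 := by rw [hTQ]; exact hgn0
    have heq : T (chi d I) x = g (Nat.find hex) x := by rw [h1 _ h0 hTQne, hTQ]
    have habs : ‖g (Nat.find hex) x‖ = 1 := by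
      rw [← hTQ]
      exact (h3 _).resolve_left hTQne
    have hhx : hfun x = g (Nat.find hex) x := hfun_eq hxE
    have harg : Complex.exp (Complex.I * ((hfun x).arg : ℝ)) = g (Nat.find hex) x := by
      have h5 := Complex.norm_mul_exp_arg_mul_I (g (Nat.find hex) x)
      rw [habs, Complex.ofReal_one, one_mul] at h5
      rw [hhx, mul_comm]
      exact h5
    rw [heq]
    exact harg.symm
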